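/- arXiv:1506.03192 — 4 statements merged into one kernel-verified Lean document; each statement's English description precedes it below -/
import Mathlib

section
/- For any 0 ≤ m ≤ n, the backward maximum at time n−m of the dual walk started at m satisfies L(n−m)∘ϑ^m = S(m) − min_{k∈{m,…,n}} S(k), where L(j) = max_{k=0,…,j} S(−k). -/
open scoped Classical NNReal
noncomputable section

/-- Finite point measures on `(0,∞)`, modeled as multisets of atoms in `ℝ≥0`. -/
abbrev PtM := Multiset ℝ≥0

/-- A stick: a life-length together with a finite point measure of birth times. -/
abbrev Stick := ℝ≥0 × PtM

/-- The space of doubly infinite sequences of sticks. -/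
abbrev Om := ℤ → Stick

/-- The shift operator `θ_n`. -/
def theta (n : ℤ) (ω : Om) : Om := fun k => ω (n + k)

/-- The dual (time-reversal) operator `ϑ^n`. -/
def dual (n : ℤ) (ω : Om) : Om := fun k => ω (n - k - 1)

/-- Life length of the `k`-th individual. -/
def Vc (ω : Om) (k : ℤ) : ℝ≥0 := (ω k).1

/-- Point measure (ages at childbearing) of the `k`-th individual. -/
def Pc (ω : Om) (k : ℤ) : PtM := (ω k).2

/-- The Lukasiewicz path `S`. -/
def Sw (ω : Om) (n : ℤ) : ℤ :=
  if 0 ≤ n then ∑ k ∈ Finset.range n.toNat, ((Multiset.card (Pc ω (k : ℤ)) : ℤ) - 1)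
  else - ∑ k ∈ Finset.range (-n).toNat, ((Multiset.card (Pc ω (-(k : ℤ) - 1)) : ℤ) - 1)

/-- `π(ν)`: the supremum of the support (largest atom) of a finite point measure. -/
def piM (ν : PtM) : ℝ≥0 := ν.sup

/-- `Υ_j(ν)`: removes the `j` largest atoms of `ν`. -/
def upsilon (j : ℕ) (ν : PtM) : PtM :=
  ((ν.sort (· ≤ ·)).take (Multiset.card ν - j) : List ℝ≥0)

/-- The map `Φ` driving the spine process dynamics. -/
def phiSp (Y : List PtM) (ν : PtM) : List PtM :=
  if ν = 0 then
    match Y.reverse.dropWhile (fun m => decide (Multiset.card m < 2)) with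
    | [] => []
    | h :: t => (upsilon 1 h :: t).reverse
  else Y ++ [ν]

/-- The spine process `𝕊₀ⁿ`. -/
def spine (ω : Om) : ℕ → List PtM
  | 0 => []
  | n + 1 => phiSp (spine ω n) (Pc ω (n : ℤ))

/-- `π` extended to finite sequences of point measures. -/
def piL (Y : List PtM) : ℝ≥0 := (Y.map piM).sum

/-- The chronological height process `ℍ(n) = π(𝕊₀ⁿ)`. -/
def Hchr (ω : Om) (n : ℕ) : ℝ≥0 := piL (spine ω n)

/-- The genealogical height process
`𝓗(n) = #{k ∈ {0,…,n−1} : S(k+1) ≤ min_{k+1 ≤ j ≤ n} S(j)}`. -/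
def genH (ω : Om) (n : ℕ) : ℕ :=
  ((Finset.range n).filter
    (fun k : ℕ => ∀ j : ℕ, j ∈ Finset.Icc (k + 1) n → Sw ω ((k : ℤ) + 1) ≤ Sw ω (j : ℤ))).card

/-- Weak ascending ladder height times `T(k)` (valued `⊤` if nonexistent). -/
def ladderT (ω : Om) : ℕ → ℕ∞
  | 0 => 0
  | k + 1 => sInf {x : ℕ∞ | ∃ m j : ℕ, x = (m : ℕ∞) ∧ ladderT ω k = (j : ℕ∞) ∧
      j < m ∧ Sw ω (j : ℤ) ≤ Sw ω (m : ℤ)}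

/-- `T^{-1}(n) = min{k ≥ 0 : T(k) ≥ n}`. -/
def Tinv (ω : Om) (n : ℕ) : ℕ := sInf {k : ℕ | (n : ℕ∞) ≤ ladderT ω k}

/-- `T̃^{-1}(n) = max{k ≥ 0 : T(k) ≤ n}`. -/
def tildeTinv (ω : Om) (n : ℕ) : ℕ := sSup {k : ℕ | ladderT ω k ≤ (n : ℕ∞)}

/-- First passage time upward `τ_ℓ = inf{k > 0 : S(k) ≥ ℓ}`. -/
def tauUp (ω : Om) (ℓ : ℤ) : ℕ∞ :=
  sInf {x : ℕ∞ | ∃ k : ℕ, x = (k : ℕ∞) ∧ 0 < k ∧ ℓ ≤ Sw ω (k : ℤ)}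

/-- First hitting time downward `τ⁻_ℓ = inf{k ≥ 0 : S(k) = −ℓ}`. -/
def tauDown (ω : Om) (ℓ : ℤ) : ℕ∞ :=
  sInf {x : ℕ∞ | ∃ k : ℕ, x = (k : ℕ∞) ∧ Sw ω (k : ℤ) = -ℓ}

/-- `τ_ℓ` as a natural number (junk value `0` when infinite). -/
def tauUpN (ω : Om) (ℓ : ℤ) : ℕ := (tauUp ω ℓ).toNat

/-- The undershoot `ζ_ℓ = ℓ − S(τ_ℓ − 1)`. -/
def zetaU (ω : Om) (ℓ : ℤ) : ℤ := ℓ - Sw ω ((tauUpN ω ℓ : ℤ) - 1)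

/-- `μ_ℓ = Υ_{ζ_ℓ}(𝒫_{τ_ℓ − 1})`. -/
def muU (ω : Om) (ℓ : ℤ) : PtM := upsilon (zetaU ω ℓ).toNat (Pc ω ((tauUpN ω ℓ : ℤ) - 1))

/-- `𝒬(k) = μ₀ ∘ θ_{T(k−1)}`. -/
def Qcal (ω : Om) (k : ℕ) : PtM := muU (theta ((ladderT ω (k - 1)).toNat : ℤ) ω) 0

/-- `𝕐(k) = π(𝒬(k))`. -/
def Ybb (ω : Om) (k : ℕ) : ℝ≥0 := piM (Qcal ω k)

/-- The backward maximum `L(m) = max_{0 ≤ k ≤ m} S(−k)`. -/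
def Lmax (ω : Om) (m : ℕ) : ℤ :=
  Finset.sup' (Finset.range (m + 1)) Finset.nonempty_range_add_one (fun k => Sw ω (-(k : ℤ)))

/-- The ancestor set `𝒜(n) = {n − T(k)∘ϑ^n : k ≥ 0}` (only finite ladder times). -/
def Aset (ω : Om) (n : ℕ) : Set ℤ :=
  {a | ∃ k j : ℕ, ladderT (dual (n : ℤ) ω) k = (j : ℕ∞) ∧ a = (n : ℤ) - (j : ℤ)}

/-- `mrca(m,n) = max(𝒜(m) ∩ 𝒜(n))`. -/
def mrcaZ (ω : Om) (m n : ℕ) : ℤ := sSup (Aset ω m ∩ Aset ω n)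

/-- `χ(m,k) = inf{j ≥ m+1 : S(j) = S(m+1) − k}`. -/
def chiT (ω : Om) (m k : ℕ) : ℕ∞ :=
  sInf {x : ℕ∞ | ∃ j : ℕ, x = (j : ℕ∞) ∧ m + 1 ≤ j ∧
    Sw ω (j : ℤ) = Sw ω ((m : ℤ) + 1) - (k : ℤ)}

/-- `χ(m) = inf{j ≥ m+1 : S(j) = S(m) − 1}`. -/
def chiF (ω : Om) (m : ℕ) : ℕ∞ :=
  sInf {x : ℕ∞ | ∃ j : ℕ, x = (j : ℕ∞) ∧ m + 1 ≤ j ∧ Sw ω (j : ℤ) = Sw ω (m : ℤ) - 1}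

/-- The functional `D_ℓ(𝕊₀^m)` of the spine, expressed through the dual walk:
`D_ℓ = (Σ_{i : 0 < T(i) ≤ min(τ_ℓ, m)} 𝕐(i) − 1_{τ_ℓ ≤ m} π(μ_ℓ)) ∘ ϑ^m`, with `D_0 ≡ 0`. -/
def Dfun (ω : Om) (m : ℕ) (ℓ : ℤ) : ℝ :=
  if ℓ < 1 then 0 else
    (∑ i ∈ (Finset.Icc 1 m).filter
        (fun i => 0 < ladderT (dual (m : ℤ) ω) i ∧
          ladderT (dual (m : ℤ) ω) i ≤ min (tauUp (dual (m : ℤ) ω) ℓ) (m : ℕ∞)),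
      (Ybb (dual (m : ℤ) ω) i : ℝ))
    - (if tauUp (dual (m : ℤ) ω) ℓ ≤ (m : ℕ∞) then (piM (muU (dual (m : ℤ) ω) ℓ) : ℝ) else 0)

/-- `K_j = 2𝒱(j−1) − ℍ(j)`. -/
def Kt (ω : Om) (j : ℕ) : ℝ := 2 * ∑ k ∈ Finset.range j, (Vc ω (k : ℤ) : ℝ) - (Hchr ω j : ℝ)

/-- The chronological contour process: on `[K_n, K_{n+1}]` it increases at rate `+1` from
`ℍ(n)` up to `ℍ(n) + V_n` and then decreases at rate `−1` down to `ℍ(n+1)`. -/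
def contour (ω : Om) (t : ℝ) : ℝ :=
  let n := sSup {j : ℕ | Kt ω j ≤ t}
  min ((Hchr ω n : ℝ) + (t - Kt ω n)) ((Hchr ω (n + 1) : ℝ) + (Kt ω (n + 1) - t))


lemma Sw_neg' (ω : Om) (k : ℕ) :
    Sw ω (-(k:ℤ)) = - ∑ j ∈ Finset.range k, ((Multiset.card (Pc ω (-(j:ℤ)-1)) : ℤ) - 1) := by
  rcases Nat.eq_zero_or_pos k with h|h
  · subst h; simp [Sw]
  · rw [Sw, if_neg (by omega)]
    norm_num

lemma Sw_nat' (ω : Om) (k : ℕ) :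
    Sw ω (k:ℤ) = ∑ j ∈ Finset.range k, ((Multiset.card (Pc ω (j:ℤ)) : ℤ) - 1) := by
  rw [Sw, if_pos (by positivity)]; simp

lemma Sw_dual' (ω : Om) (m k : ℕ) :
    Sw (dual (m:ℤ) ω) (-(k:ℤ)) = Sw ω (m:ℤ) - Sw ω ((m+k : ℕ) : ℤ) := by
  rw [Sw_neg', Sw_nat', Sw_nat', Finset.sum_range_add]
  have : ∀ j ∈ Finset.range k,
      ((Multiset.card (Pc (dual (m:ℤ) ω) (-(j:ℤ)-1)) : ℤ) - 1)
        = ((Multiset.card (Pc ω ((m + j : ℕ) : ℤ)) : ℤ) - 1) := by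
    intro j _
    have : Pc (dual (m:ℤ) ω) (-(j:ℤ)-1) = Pc ω ((m + j : ℕ):ℤ) := by
      simp only [Pc, dual]
      congr 1
      push_cast; ring
    rw [this]
  rw [Finset.sum_congr rfl this]
  ring

theorem stmt3 (ω : Om) (m n : ℕ) (hmn : m ≤ n) :
    Lmax (dual (m : ℤ) ω) (n - m)
      = Sw ω (m : ℤ) -
        Finset.inf' (Finset.Icc m n) (Finset.nonempty_Icc.2 hmn) (fun k => Sw ω (k : ℤ)) := by
  unfold Lmax
  apply le_antisymm
  · apply Finset.sup'_le
    intro k hk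
    rw [Sw_dual']
    have hk' : m + k ∈ Finset.Icc m n := by
      simp only [Finset.mem_range] at hk
      simp only [Finset.mem_Icc]; omega
    have := Finset.inf'_le (b := m + k) (fun k : ℕ => Sw ω (k:ℤ)) hk'
    omega
  · obtain ⟨j, hj, hje⟩ := Finset.exists_mem_eq_inf' (Finset.nonempty_Icc.2 hmn)
      (fun k : ℕ => Sw ω (k:ℤ))
    rw [hje]
    simp only [Finset.mem_Icc] at hj
    have hk : j - m ∈ Finset.range (n - m + 1) := by simp; omega
    have h2 := Finset.le_sup' (fun k : ℕ => Sw (dual (m:ℤ) ω) (-(k:ℤ))) hk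
    rw [Sw_dual'] at h2
    have hjm : m + (j - m) = j := by omega
    rw [hjm] at h2
    linarith

end
end

section
/- Let S be a walk with S(0)=0 whose negative jumps are of size exactly −1. Fix m ≥ 0 with |𝒫_m| > 0 and set χ(m) = inf{j ≥ m+1 : S(j) = S(m) − 1}. Then for every n with m+1 ≤ n ≤ χ(m)−1, the number of weak ascending ladder times of the reversed walk from n strictly exceeds that from m; equivalently, the height process satisfies 𝓗(n) > 𝓗(m). -/
open scoped Classical NNReal
noncomputable section

lemma Sw_succ (ω : Om) (k : ℕ) :
    Sw ω ((k:ℤ)+1) = Sw ω (k:ℤ) + ((Multiset.card (Pc ω (k:ℤ)) : ℤ) - 1) := by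
  have h1 : ((k:ℤ)+1) = ((k+1 : ℕ) : ℤ) := by push_cast; ring
  rw [h1]
  unfold Sw
  rw [if_pos (Int.natCast_nonneg _), if_pos (Int.natCast_nonneg _), Int.toNat_natCast,
    Int.toNat_natCast, Finset.sum_range_succ]

lemma Sw_step (ω : Om) (k : ℕ) : Sw ω (k:ℤ) - 1 ≤ Sw ω ((k:ℤ)+1) := by
  rw [Sw_succ]
  have : (0:ℤ) ≤ (Multiset.card (Pc ω (k:ℤ)) : ℤ) := by positivity
  omega

theorem stmt5 (ω : Om) (m n : ℕ) (hP : 0 < Multiset.card (Pc ω (m : ℤ)))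
    (h1 : m + 1 ≤ n) (h2 : (n : ℕ∞) < chiF ω m) :
    genH ω m < genH ω n := by
  -- no hitting of S(m) - 1 on [m+1, n]
  have hB : ∀ j : ℕ, m + 1 ≤ j → j ≤ n → Sw ω (j:ℤ) ≠ Sw ω (m:ℤ) - 1 := by
    intro j hj1 hj2 hEq
    have hle : chiF ω m ≤ (j : ℕ∞) := sInf_le ⟨j, rfl, hj1, hEq⟩
    have : (n : ℕ∞) < (j : ℕ∞) := lt_of_lt_of_le h2 hle
    exact absurd (by exact_mod_cast hj2 : (j : ℕ∞) ≤ (n : ℕ∞)) (not_le.mpr this)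
  -- S stays ≥ S(m) on [m, n]
  have hC : ∀ j : ℕ, m ≤ j → j ≤ n → Sw ω (m:ℤ) ≤ Sw ω (j:ℤ) := by
    intro j
    induction j with
    | zero => intro hmj _; interval_cases m; exact le_refl _
    | succ j ih =>
      intro hmj hjn
      by_cases hm : m ≤ j
      · have h1' := ih hm (by omega)
        have h2' := Sw_step ω j
        have h3' := hB (j+1) (by omega) hjn
        push_cast at h3' ⊢
        omega
      · have : m = j + 1 := by omega
        rw [this]
  -- argmin of S on [m+1, n]
  have hne : (Finset.Icc (m+1) n).Nonempty := ⟨n, by rw [Finset.mem_Icc]; omega⟩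
  obtain ⟨j0, hj0mem, hmin⟩ :=
    Finset.exists_min_image (Finset.Icc (m+1) n) (fun j => Sw ω (j:ℤ)) hne
  rw [Finset.mem_Icc] at hj0mem
  set F : ℕ → Finset ℕ := fun t => (Finset.range t).filter
    (fun k : ℕ => ∀ j : ℕ, j ∈ Finset.Icc (k + 1) t → Sw ω ((k : ℤ) + 1) ≤ Sw ω (j : ℤ)) with hF
  have hsub : F m ⊆ F n := by
    intro k hk
    simp only [hF, Finset.mem_filter, Finset.mem_range] at hk ⊢
    obtain ⟨hkm, hpred⟩ := hk
    refine ⟨by omega, fun j hj => ?_⟩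
    rw [Finset.mem_Icc] at hj
    by_cases hjm : j ≤ m
    · exact hpred j (Finset.mem_Icc.mpr ⟨hj.1, hjm⟩)
    · have hSm : Sw ω ((k:ℤ)+1) ≤ Sw ω (m:ℤ) :=
        hpred m (Finset.mem_Icc.mpr ⟨by omega, le_refl m⟩)
      exact le_trans hSm (hC j (by omega) hj.2)
  have hmemn : j0 - 1 ∈ F n := by
    simp only [hF, Finset.mem_filter, Finset.mem_range]
    refine ⟨by omega, fun j hj => ?_⟩
    rw [Finset.mem_Icc] at hj
    have hc : ((j0 - 1 : ℕ) : ℤ) + 1 = (j0 : ℤ) := by omega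
    rw [hc]
    exact hmin j (Finset.mem_Icc.mpr ⟨by omega, hj.2⟩)
  have hnotm : j0 - 1 ∉ F m := by
    simp only [hF, Finset.mem_filter, Finset.mem_range]
    intro h
    omega
  have : F m ⊂ F n := (Finset.ssubset_iff_of_subset hsub).mpr ⟨j0 - 1, hmemn, hnotm⟩
  exact Finset.card_lt_card this


end
end

section
/- For m ≥ 0 with |𝒫_m| > 0 and k ∈ {0,…,|𝒫_m|−1}, the time χ(m,k) = inf{j ≥ m+1 : S(j) = S(m+1) − k} satisfies 𝓗(χ(m,k)) = 𝓗(m) + 1, where 𝓗(n) = #{j ∈ {0,…,n−1} : S(j+1) ≤ min_{j+1 ≤ i ≤ n} S(i)} is the discrete height process. -/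
open scoped Classical NNReal
noncomputable section

lemma SwN (ω : Om) (n : ℕ) :
    Sw ω (n : ℤ) = ∑ k ∈ Finset.range n, ((Multiset.card (Pc ω (k : ℤ)) : ℤ) - 1) := by
  simp [Sw]

lemma Sw_step_s6 (ω : Om) (n : ℕ) :
    Sw ω ((n : ℤ) + 1) = Sw ω (n : ℤ) + ((Multiset.card (Pc ω (n : ℤ)) : ℤ) - 1) := by
  have h : ((n : ℤ) + 1) = ((n + 1 : ℕ) : ℤ) := by push_cast; ring
  rw [h, SwN, SwN, Finset.sum_range_succ]

lemma cast_succ_int (q : ℕ) : ((q + 1 : ℕ) : ℤ) = (q : ℤ) + 1 := by push_cast; ring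

lemma chiT_spec (ω : Om) (m k c : ℕ) (hc : chiT ω m k = (c : ℕ∞)) :
    (m + 1 ≤ c ∧ Sw ω (c : ℤ) = Sw ω ((m : ℤ) + 1) - (k : ℤ)) ∧
    ∀ j : ℕ, m + 1 ≤ j → Sw ω (j : ℤ) = Sw ω ((m : ℤ) + 1) - (k : ℤ) → c ≤ j := by
  set N : Set ℕ := {j | m + 1 ≤ j ∧ Sw ω (j : ℤ) = Sw ω ((m : ℤ) + 1) - (k : ℤ)} with hN
  have hTN : {x : ℕ∞ | ∃ j : ℕ, x = (j : ℕ∞) ∧ m + 1 ≤ j ∧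
      Sw ω (j : ℤ) = Sw ω ((m : ℤ) + 1) - (k : ℤ)} = (fun j : ℕ => (j : ℕ∞)) '' N := by
    ext x
    constructor
    · rintro ⟨j, rfl, h1, h2⟩; exact ⟨j, ⟨h1, h2⟩, rfl⟩
    · rintro ⟨j, ⟨h1, h2⟩, rfl⟩; exact ⟨j, rfl, h1, h2⟩
  have hc' : chiT ω m k = (c : ℕ∞) := hc
  rw [chiT, hTN] at hc'
  have hne : N.Nonempty := by
    by_contra h
    rw [Set.not_nonempty_iff_eq_empty] at h
    rw [h, Set.image_empty, sInf_empty] at hc'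
    exact (ENat.coe_ne_top c) hc'.symm
  have hmem : sInf N ∈ N := Nat.sInf_mem hne
  have hle : ((sInf N : ℕ) : ℕ∞) ≤ (c : ℕ∞) := by
    rw [← hc']
    apply le_sInf
    rintro x ⟨j, hj, rfl⟩
    show ((sInf N : ℕ) : ℕ∞) ≤ (j : ℕ∞)
    exact_mod_cast Nat.sInf_le hj
  have hge : (c : ℕ∞) ≤ ((sInf N : ℕ) : ℕ∞) := by
    rw [← hc']
    exact sInf_le ⟨sInf N, hmem, rfl⟩
  have hceq : c = sInf N := by exact_mod_cast le_antisymm hge hle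
  refine ⟨hceq ▸ hmem, fun j hj1 hj2 => ?_⟩
  rw [hceq]
  exact Nat.sInf_le ⟨hj1, hj2⟩

theorem stmt6 (ω : Om) (m k c : ℕ) (hP : 0 < Multiset.card (Pc ω (m : ℤ)))
    (hk : k < Multiset.card (Pc ω (m : ℤ))) (hc : chiT ω m k = (c : ℕ∞)) :
    genH ω c = genH ω m + 1 := by
  obtain ⟨⟨hmc, hSc⟩, hmin⟩ := chiT_spec ω m k c hc
  set L : ℤ := Sw ω ((m : ℤ) + 1) - (k : ℤ) with hL
  have hkcard : (k : ℤ) + 1 ≤ (Multiset.card (Pc ω (m : ℤ)) : ℤ) := by exact_mod_cast hk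
  have hLm : Sw ω (m : ℤ) ≤ L := by
    rw [hL, Sw_step_s6]; linarith
  -- strict lower bound strictly before c
  have hstrict : ∀ j : ℕ, m + 1 ≤ j → j < c → L < Sw ω (j : ℤ) := by
    intro j hj
    induction j, hj using Nat.le_induction with
    | base =>
      intro hlt
      have h1 : Sw ω ((m + 1 : ℕ) : ℤ) = Sw ω ((m : ℤ) + 1) := by rw [cast_succ_int]
      have hne : Sw ω ((m + 1 : ℕ) : ℤ) ≠ L := by
        intro h
        have := hmin (m + 1) le_rfl (h1 ▸ h)
        omega
      have hle : L ≤ Sw ω ((m + 1 : ℕ) : ℤ) := by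
        rw [h1, hL]
        have : (0 : ℤ) ≤ (k : ℤ) := Int.natCast_nonneg k
        linarith
      exact lt_of_le_of_ne hle (Ne.symm hne)
    | succ n hn ih =>
      intro hlt
      have hnc : n < c := by omega
      have h1 : L < Sw ω (n : ℤ) := ih hnc
      have hstep := Sw_step_s6 ω n
      have hcard : (0 : ℤ) ≤ (Multiset.card (Pc ω (n : ℤ)) : ℤ) := Int.natCast_nonneg _
      have h2 : Sw ω ((n + 1 : ℕ) : ℤ) = Sw ω ((n : ℤ) + 1) := by rw [cast_succ_int]
      have hge : L ≤ Sw ω ((n + 1 : ℕ) : ℤ) := by rw [h2, hstep]; linarith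
      have hne : Sw ω ((n + 1 : ℕ) : ℤ) ≠ L := by
        intro h
        have := hmin (n + 1) (by omega) (h2 ▸ h)
        omega
      exact lt_of_le_of_ne hge (Ne.symm hne)
  have hSceq : Sw ω (c : ℤ) = L := hSc
  have hlow : ∀ i : ℕ, m + 1 ≤ i → i ≤ c → L ≤ Sw ω (i : ℤ) := by
    intro i h1 h2
    rcases eq_or_lt_of_le h2 with h | h
    · rw [h, hSceq]
    · exact le_of_lt (hstrict i h1 h)
  -- set equality
  have hc1 : 1 ≤ c := by omega
  have hset : (Finset.range c).filter
      (fun q : ℕ => ∀ j : ℕ, j ∈ Finset.Icc (q + 1) c → Sw ω ((q : ℤ) + 1) ≤ Sw ω (j : ℤ))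
      = insert (c - 1) ((Finset.range m).filter
      (fun q : ℕ => ∀ j : ℕ, j ∈ Finset.Icc (q + 1) m → Sw ω ((q : ℤ) + 1) ≤ Sw ω (j : ℤ))) := by
    ext q
    simp only [Finset.mem_filter, Finset.mem_insert, Finset.mem_range, Finset.mem_Icc]
    constructor
    · rintro ⟨hqc, hcond⟩
      by_cases hqm : m ≤ q
      · left
        by_contra hne
        have hq1c : q + 1 < c := by omega
        have hstrictq : L < Sw ω ((q + 1 : ℕ) : ℤ) := hstrict (q + 1) (by omega) hq1c
        have := hcond c ⟨by omega, le_refl c⟩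
        rw [hSceq] at this
        rw [cast_succ_int] at hstrictq
        linarith
      · right
        refine ⟨by omega, fun j hj => hcond j ⟨hj.1, by omega⟩⟩
    · rintro (hq | ⟨hqm, hcond⟩)
      · refine ⟨by omega, fun j hj => ?_⟩
        have hj' : j = c := by omega
        have hq1 : (q : ℤ) + 1 = (c : ℤ) := by omega
        rw [hj', hq1]
      · refine ⟨by omega, fun j hj => ?_⟩
        by_cases hjm : j ≤ m
        · exact hcond j ⟨hj.1, hjm⟩
        · have h1 : Sw ω ((q : ℤ) + 1) ≤ Sw ω (m : ℤ) := hcond m ⟨by omega, le_refl m⟩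
          have h2 : L ≤ Sw ω (j : ℤ) := hlow j (by omega) hj.2
          linarith
  have hnotmem : c - 1 ∉ (Finset.range m).filter
      (fun q : ℕ => ∀ j : ℕ, j ∈ Finset.Icc (q + 1) m → Sw ω ((q : ℤ) + 1) ≤ Sw ω (j : ℤ)) := by
    simp only [Finset.mem_filter, Finset.mem_range]
    rintro ⟨h1, -⟩
    omega
  rw [genH, genH, hset, Finset.card_insert_of_notMem hnotmem]

end
end

section
/- Let n ≥ 0 with L(n)∘θ_n > 0 (equivalently n is not a weak ascending ladder time of S). Then T(T^{−1}(n)) = n + τ_{L(n)}∘θ_n, i.e., the first ladder time at or after n equals n plus the first passage time of the shifted walk to level max_{0≤k≤n}S − S(n). -/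
open scoped Classical NNReal
noncomputable section

namespace Stmt9Aux

lemma sInf_coe_find {P : ℕ → Prop} [DecidablePred P] (h : ∃ k, P k) :
    sInf {x : ℕ∞ | ∃ k : ℕ, x = (k : ℕ∞) ∧ P k} = ((Nat.find h : ℕ) : ℕ∞) := by
  apply le_antisymm
  · exact sInf_le ⟨_, rfl, Nat.find_spec h⟩
  · refine le_sInf ?_
    rintro x ⟨k, rfl, hk⟩
    exact_mod_cast Nat.find_le hk

lemma sInf_coe_top {P : ℕ → Prop} (h : ¬ ∃ k, P k) :
    sInf {x : ℕ∞ | ∃ k : ℕ, x = (k : ℕ∞) ∧ P k} = ⊤ := by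
  refine (congrArg sInf (?_ : _ = (∅ : Set ℕ∞))).trans sInf_empty
  ext x
  simp only [Set.mem_setOf_eq, Set.mem_empty_iff_false, iff_false]
  rintro ⟨k, rfl, hk⟩
  exact h ⟨k, hk⟩

/-- weak record time -/
def isRec (ω : Om) (m : ℕ) : Prop := ∀ j, j ≤ m → Sw ω (j : ℤ) ≤ Sw ω (m : ℤ)

lemma isRec_zero (ω : Om) : isRec ω 0 := by
  intro j hj
  interval_cases j
  exact le_rfl

lemma ladderT_zero (ω : Om) : ladderT ω 0 = 0 := rfl

lemma ladderT_succ (ω : Om) (k : ℕ) :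
    ladderT ω (k + 1) = sInf {x : ℕ∞ | ∃ m : ℕ, x = (m : ℕ∞) ∧
      ∃ j : ℕ, ladderT ω k = (j : ℕ∞) ∧ j < m ∧ Sw ω (j : ℤ) ≤ Sw ω (m : ℤ)} := by
  show sInf _ = sInf _
  congr 1
  ext x
  constructor
  · rintro ⟨m, j, rfl, h1, h2, h3⟩; exact ⟨m, rfl, j, h1, h2, h3⟩
  · rintro ⟨m, rfl, j, h1, h2, h3⟩; exact ⟨m, j, rfl, h1, h2, h3⟩

lemma ladderT_rec (ω : Om) : ∀ k (j : ℕ), ladderT ω k = (j : ℕ∞) → isRec ω j := by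
  intro k
  induction k with
  | zero =>
    intro j hj
    rw [ladderT_zero] at hj
    have hj0 : j = 0 := by exact_mod_cast hj.symm
    subst hj0
    exact isRec_zero ω
  | succ k ih =>
    intro m hm
    rw [ladderT_succ] at hm
    by_cases h : ∃ p : ℕ, ∃ j : ℕ, ladderT ω k = (j : ℕ∞) ∧ j < p ∧ Sw ω (j : ℤ) ≤ Sw ω (p : ℤ)
    · rw [sInf_coe_find h] at hm
      have hm' : Nat.find h = m := by exact_mod_cast hm
      obtain ⟨j, hTj, hjm, hfj⟩ := Nat.find_spec h
      rw [hm'] at hjm hfj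
      have hjrec := ih j hTj
      intro i hi
      rcases le_or_gt i j with hij | hij
      · exact (hjrec i hij).trans hfj
      · rcases eq_or_lt_of_le hi with rfl | him
        · exact le_rfl
        · have hmin : ¬ (∃ j' : ℕ, ladderT ω k = (j' : ℕ∞) ∧ j' < i ∧ Sw ω (j' : ℤ) ≤ Sw ω (i : ℤ)) := by
            have := Nat.find_min h (by omega : i < Nat.find h)
            exact this
          have : ¬ Sw ω (j : ℤ) ≤ Sw ω (i : ℤ) := fun hle => hmin ⟨j, hTj, hij, hle⟩
          exact (not_le.mp this).le.trans hfj
    · rw [sInf_coe_top h] at hm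
      exact absurd hm (by simp)

lemma le_ladderT (ω : Om) : ∀ k (j : ℕ), ladderT ω k = (j : ℕ∞) → k ≤ j := by
  intro k
  induction k with
  | zero => intro j _; exact Nat.zero_le j
  | succ k ih =>
    intro m hm
    rw [ladderT_succ] at hm
    by_cases h : ∃ p : ℕ, ∃ j : ℕ, ladderT ω k = (j : ℕ∞) ∧ j < p ∧ Sw ω (j : ℤ) ≤ Sw ω (p : ℤ)
    · rw [sInf_coe_find h] at hm
      have hm' : Nat.find h = m := by exact_mod_cast hm
      obtain ⟨j, hTj, hjm, _⟩ := Nat.find_spec h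
      have := ih j hTj
      omega
    · rw [sInf_coe_top h] at hm
      exact absurd hm (by simp)

lemma ladderT_le_succ (ω : Om) (k : ℕ) : ladderT ω k ≤ ladderT ω (k + 1) := by
  rw [ladderT_succ]
  refine le_sInf ?_
  rintro x ⟨m, rfl, j, hj, hjm, _⟩
  rw [hj]
  exact_mod_cast hjm.le

lemma ladderT_mono (ω : Om) : Monotone (ladderT ω) :=
  monotone_nat_of_le_succ (ladderT_le_succ ω)

lemma rec_hit (ω : Om) : ∀ m : ℕ, isRec ω m → ∃ k : ℕ, ladderT ω k = (m : ℕ∞) := by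
  intro m
  induction m using Nat.strong_induction_on with
  | _ m ih =>
    rcases Nat.eq_zero_or_pos m with rfl | hm
    · exact fun _ => ⟨0, rfl⟩
    intro hrec
    set j := Nat.findGreatest (isRec ω) (m - 1) with hj
    have hjrec : isRec ω j := Nat.findGreatest_spec (Nat.zero_le _) (isRec_zero ω)
    have hjle : j ≤ m - 1 := Nat.findGreatest_le _
    have hjm : j < m := by omega
    obtain ⟨k, hk⟩ := ih j hjm hjrec
    have hex : ∃ p : ℕ, ∃ j' : ℕ, ladderT ω k = (j' : ℕ∞) ∧ j' < p ∧ Sw ω (j' : ℤ) ≤ Sw ω (p : ℤ) :=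
      ⟨m, j, hk, hjm, hrec j hjm.le⟩
    have hsucc : ladderT ω (k + 1) = ((Nat.find hex : ℕ) : ℕ∞) := by
      rw [ladderT_succ, sInf_coe_find hex]
    set p := Nat.find hex with hp
    obtain ⟨j', hTj', hj'p, hfj'⟩ := Nat.find_spec hex
    have hj'j : j = j' := by
      have := hk.symm.trans hTj'
      exact_mod_cast this
    subst hj'j
    have hple : p ≤ m := Nat.find_le ⟨j, hk, hjm, hrec j hjm.le⟩
    have hprec : isRec ω p := by
      intro i hi
      rcases le_or_gt i j with hij | hij
      · exact (hjrec i hij).trans hfj'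
      · rcases eq_or_lt_of_le hi with rfl | hip
        · exact le_rfl
        · have hmin : ¬ (∃ q : ℕ, ladderT ω k = (q : ℕ∞) ∧ q < i ∧ Sw ω (q : ℤ) ≤ Sw ω (i : ℤ)) :=
            Nat.find_min hex (by omega)
          have : ¬ Sw ω (j : ℤ) ≤ Sw ω (i : ℤ) := fun hle => hmin ⟨j, hk, hij, hle⟩
          exact (not_le.mp this).le.trans hfj'
    have hpm : p = m := by
      by_contra hne
      have hplt : p < m := lt_of_le_of_ne hple hne
      have : p ≤ j := Nat.le_findGreatest (by omega) hprec
      omega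
    exact ⟨k + 1, by rw [hsucc, hpm]⟩


lemma Sw_theta (ω : Om) (n k : ℕ) :
    Sw (theta (n : ℤ) ω) (k : ℤ) = Sw ω ((n + k : ℕ) : ℤ) - Sw ω (n : ℤ) := by
  simp only [Sw, theta, Pc]
  rw [if_pos (by positivity : (0:ℤ) ≤ (k:ℤ)), if_pos (by positivity : (0:ℤ) ≤ ((n + k : ℕ):ℤ)),
    if_pos (by positivity : (0:ℤ) ≤ (n:ℤ))]
  simp only [Int.toNat_natCast]
  rw [Finset.sum_range_add]
  have : ∀ i ∈ Finset.range k,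
      ((Multiset.card (ω ((n:ℤ) + (i:ℤ))).2 : ℤ) - 1)
        = ((Multiset.card (ω (((n + i : ℕ)):ℤ)).2 : ℤ) - 1) := by
    intro i _
    push_cast
    ring_nf
  rw [Finset.sum_congr rfl this]
  ring

lemma Sw_theta_neg (ω : Om) (n k : ℕ) (hk : k ≤ n) :
    Sw (theta (n : ℤ) ω) (-(k : ℤ)) = Sw ω ((n - k : ℕ) : ℤ) - Sw ω (n : ℤ) := by
  rcases Nat.eq_zero_or_pos k with rfl | hkpos
  · simp [Sw, theta, Pc]
  simp only [Sw, theta, Pc]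
  rw [if_neg (by omega : ¬ (0:ℤ) ≤ -(k:ℤ)), if_pos (by positivity : (0:ℤ) ≤ ((n - k : ℕ):ℤ)),
    if_pos (by positivity : (0:ℤ) ≤ (n:ℤ))]
  simp only [neg_neg, Int.toNat_natCast]
  have hsplit : n = (n - k) + k := by omega
  have := Finset.sum_range_add
    (fun i => ((Multiset.card (ω ((i : ℕ) : ℤ)).2 : ℤ) - 1)) (n - k) k
  rw [show (Finset.range n) = Finset.range ((n-k)+k) by rw [← hsplit]] at *
  rw [this]
  have hrefl : ∑ i ∈ Finset.range k,
      ((Multiset.card (ω ((n:ℤ) + (-(i:ℤ) - 1))).2 : ℤ) - 1)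
      = ∑ i ∈ Finset.range k,
      ((Multiset.card (ω (((n - k + i : ℕ)) : ℤ)).2 : ℤ) - 1) := by
    rw [← Finset.sum_range_reflect
      (fun i => ((Multiset.card (ω (((n - k + i : ℕ)) : ℤ)).2 : ℤ) - 1)) k]
    refine Finset.sum_congr rfl ?_
    intro i hi
    simp only [Finset.mem_range] at hi
    have harg : ((n:ℤ) + (-(i:ℤ) - 1)) = ((n - k + (k - 1 - i) : ℕ) : ℤ) := by omega
    rw [harg]
  rw [hrefl]
  ring

lemma Lmax_theta (ω : Om) (n : ℕ) :
    Lmax (theta (n : ℤ) ω) n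
      = (Finset.range (n+1)).sup' Finset.nonempty_range_add_one (fun j => Sw ω (j : ℤ))
          - Sw ω (n : ℤ) := by
  set M := (Finset.range (n+1)).sup' Finset.nonempty_range_add_one (fun j => Sw ω (j : ℤ)) with hM
  apply le_antisymm
  · apply Finset.sup'_le
    intro k hk
    simp only [Finset.mem_range] at hk
    rw [Sw_theta_neg ω n k (by omega)]
    have : Sw ω ((n - k : ℕ) : ℤ) ≤ M :=
      Finset.le_sup' (fun j : ℕ => Sw ω (j : ℤ)) (by simp [Finset.mem_range])
    omega
  · rw [sub_le_iff_le_add]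
    apply Finset.sup'_le
    intro j hj
    simp only [Finset.mem_range] at hj
    have hmem : n - j ∈ Finset.range (n+1) := by simp [Finset.mem_range]
    have := Finset.le_sup' (fun k : ℕ => Sw (theta (n : ℤ) ω) (-(k : ℤ))) hmem
    rw [Sw_theta_neg ω n (n - j) (by omega)] at this
    rw [show n - (n - j) = j by omega] at this
    unfold Lmax
    omega

end Stmt9Aux
theorem stmt9 (ω : Om) (n : ℕ) (hL : 0 < Lmax (theta (n : ℤ) ω) n) :
    ladderT ω (Tinv ω n) = (n : ℕ∞) + tauUp (theta (n : ℤ) ω) (Lmax (theta (n : ℤ) ω) n) := by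
  classical
  have hM := Stmt9Aux.Lmax_theta ω n
  set M := (Finset.range (n+1)).sup' Finset.nonempty_range_add_one (fun j => Sw ω (j : ℤ)) with hMdef
  have hfn : Sw ω (n : ℤ) < M := by rw [hM] at hL; omega
  have htau : tauUp (theta (n:ℤ) ω) (Lmax (theta (n:ℤ) ω) n)
      = sInf {x : ℕ∞ | ∃ k : ℕ, x = (k:ℕ∞) ∧ (0 < k ∧ M ≤ Sw ω ((n + k : ℕ):ℤ))} := by
    unfold tauUp
    congr 1
    ext x
    constructor
    · rintro ⟨k, rfl, hk, hle⟩
      refine ⟨k, rfl, hk, ?_⟩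
      rw [Stmt9Aux.Sw_theta ω n k, hM] at hle
      omega
    · rintro ⟨k, rfl, hk, hle⟩
      refine ⟨k, rfl, hk, ?_⟩
      rw [Stmt9Aux.Sw_theta ω n k, hM]
      omega
  have hmemset : n ∈ {k : ℕ | (n:ℕ∞) ≤ ladderT ω k} := by
    rcases eq_or_ne (ladderT ω n) ⊤ with htop | hne
    · simp [Set.mem_setOf_eq, htop]
    · obtain ⟨j, hj⟩ := WithTop.ne_top_iff_exists.mp hne
      simp only [ENat.some_eq_coe] at hj
      have := Stmt9Aux.le_ladderT ω n j hj.symm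
      simp only [Set.mem_setOf_eq]
      rw [← hj]
      exact WithTop.coe_le_coe.mpr this
  have hTK : (n : ℕ∞) ≤ ladderT ω (Tinv ω n) := Nat.sInf_mem ⟨n, hmemset⟩
  have recM : ∀ m : ℕ, n ≤ m → Stmt9Aux.isRec ω m → M ≤ Sw ω (m:ℤ) := by
    intro m hnm hrec
    apply Finset.sup'_le
    intro j hj
    simp only [Finset.mem_range] at hj
    exact hrec j (by omega)
  by_cases hB : ∃ k : ℕ, 0 < k ∧ M ≤ Sw ω ((n + k : ℕ):ℤ)
  · rw [htau, Stmt9Aux.sInf_coe_find hB]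
    set k₀ := Nat.find hB with hk₀
    obtain ⟨hk₀pos, hk₀M⟩ := Nat.find_spec hB
    set m₀ := n + k₀ with hm₀
    have hm₀min : ∀ m : ℕ, n < m → m < m₀ → ¬ M ≤ Sw ω (m:ℤ) := by
      intro m h1 h2 hle
      apply Nat.find_min hB (show m - n < k₀ by omega)
      refine ⟨by omega, ?_⟩
      rw [show n + (m - n) = m by omega]
      exact hle
    have hm₀rec : Stmt9Aux.isRec ω m₀ := by
      intro j hj
      rcases le_or_gt j n with hjn | hjn
      · have hjM : Sw ω (j:ℤ) ≤ M :=
          Finset.le_sup' (fun i : ℕ => Sw ω (i:ℤ)) (by simp only [Finset.mem_range]; omega)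
        omega
      · rcases eq_or_lt_of_le hj with rfl | hjm
        · exact le_rfl
        · have h3 := hm₀min j hjn hjm
          omega
    obtain ⟨k, hk⟩ := Stmt9Aux.rec_hit ω m₀ hm₀rec
    have hKk : Tinv ω n ≤ k := Nat.sInf_le (by
      simp only [Set.mem_setOf_eq]
      rw [hk]
      exact_mod_cast (show n ≤ m₀ by omega))
    have hle : ladderT ω (Tinv ω n) ≤ (m₀ : ℕ∞) := by
      calc ladderT ω (Tinv ω n) ≤ ladderT ω k := Stmt9Aux.ladderT_mono ω hKk
        _ = (m₀ : ℕ∞) := hk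
    have hne : ladderT ω (Tinv ω n) ≠ ⊤ := fun h => by simp [h] at hle
    obtain ⟨m, hm⟩ := WithTop.ne_top_iff_exists.mp hne
    simp only [ENat.some_eq_coe] at hm
    have hm' : ladderT ω (Tinv ω n) = (m : ℕ∞) := hm.symm
    have hmm₀ : m ≤ m₀ := by rw [← hm] at hle; exact WithTop.coe_le_coe.mp hle
    have hnm : n ≤ m := by rw [← hm] at hTK; exact WithTop.coe_le_coe.mp hTK
    have hmrec := Stmt9Aux.ladderT_rec ω _ m hm'
    have hmn : n < m := by
      rcases eq_or_lt_of_le hnm with heq | h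
      · subst heq
        have := recM n le_rfl hmrec
        omega
      · exact h
    have hmeq : m = m₀ := by
      by_contra hne2
      exact hm₀min m hmn (by omega) (recM m hnm hmrec)
    rw [hm', hmeq, hm₀]
    push_cast
    rfl
  · rw [htau, Stmt9Aux.sInf_coe_top hB, add_top]
    by_contra hne
    obtain ⟨m, hm⟩ := WithTop.ne_top_iff_exists.mp hne
    simp only [ENat.some_eq_coe] at hm
    have hm' : ladderT ω (Tinv ω n) = (m : ℕ∞) := hm.symm
    have hnm : n ≤ m := by rw [← hm] at hTK; exact WithTop.coe_le_coe.mp hTK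
    have hmrec := Stmt9Aux.ladderT_rec ω _ m hm'
    have hMm : M ≤ Sw ω (m:ℤ) := recM m hnm hmrec
    have hmn : n < m := by
      rcases eq_or_lt_of_le hnm with heq | h
      · subst heq
        omega
      · exact h
    refine hB ⟨m - n, by omega, ?_⟩
    rw [show n + (m - n) = m by omega]
    exact hMm

end
end
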